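/- Let F be a field of characteristic 0, n₁ ≥ 1 and m ≥ 1 integers, and let B = F[z_{j,i} : 1 ≤ i ≤ n₁, 1 ≤ j ≤ m] be a polynomial ring. Define the algebra homomorphism φ_x : B → F[x₁,...,x_{n₁}, x'₁,...,x'_m] by φ_x(z_{j,i}) = x_i · x'_j. Then the kernel of φ_x equals the ideal generated by all 2×2 minors z_{j₁,i₁} z_{j₂,i₂} − z_{j₁,i₂} z_{j₂,i₁} of the matrix (z_{j,i}). -/

import Mathlib

open MvPolynomial

namespace KernelPhiXAux

variable {F : Type*} [CommRing F] {n₁ m : ℕ}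


noncomputable def minors (F : Type*) [CommRing F] (n₁ m : ℕ) : Ideal (MvPolynomial (Fin m × Fin n₁) F) :=
  Ideal.span { p : MvPolynomial (Fin m × Fin n₁) F |
    ∃ (j₁ j₂ : Fin m) (i₁ i₂ : Fin n₁),
      p = X (j₁, i₁) * X (j₂, i₂) - X (j₁, i₂) * X (j₂, i₁) }

noncomputable def prodX (F : Type*) [CommRing F] {n₁ m : ℕ} (s : Multiset (Fin m × Fin n₁)) :
    MvPolynomial (Fin m × Fin n₁) F :=
  (s.map X).prod

lemma prodX_zero : prodX F (0 : Multiset (Fin m × Fin n₁)) = 1 := by simp [prodX]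

lemma prodX_cons (p : Fin m × Fin n₁) (s : Multiset (Fin m × Fin n₁)) :
    prodX F (p ::ₘ s) = X p * prodX F s := by simp [prodX]

lemma keyA : ∀ (n : ℕ) (s t : Multiset (Fin m × Fin n₁)),
    Multiset.card s = n →
    s.map Prod.fst = t.map Prod.fst → s.map Prod.snd = t.map Prod.snd →
    (prodX F s - prodX F t) ∈ minors F n₁ m := by
  intro n
  induction n with
  | zero =>
    intro s t hs h1 h2
    have hs0 : s = 0 := Multiset.card_eq_zero.mp hs
    have ht0 : t = 0 := by
      have h : Multiset.card (t.map Prod.fst) = 0 := by rw [← h1, hs0]; simp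
      simpa using h
    simp [hs0, ht0]
  | succ n ih =>
    intro s t hs h1 h2
    obtain ⟨⟨a, b⟩, hab⟩ : ∃ p, p ∈ s :=
      Multiset.card_pos_iff_exists_mem.mp (by omega)
    obtain ⟨s₀, rfl⟩ := Multiset.exists_cons_of_mem hab
    have hcard : Multiset.card s₀ = n := by simpa using hs
    by_cases hmem : (a, b) ∈ t
    · obtain ⟨t₀, rfl⟩ := Multiset.exists_cons_of_mem hmem
      have h1' : s₀.map Prod.fst = t₀.map Prod.fst := by
        simpa using h1
      have h2' : s₀.map Prod.snd = t₀.map Prod.snd := by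
        simpa using h2
      have := ih s₀ t₀ hcard h1' h2'
      have heq : prodX F ((a,b) ::ₘ s₀) - prodX F ((a,b) ::ₘ t₀)
          = X (a,b) * (prodX F s₀ - prodX F t₀) := by
        simp [prodX_cons]; ring
      rw [heq]
      exact Ideal.mul_mem_left _ _ this
    · -- find (a, b') and (a'', b) in t
      have hamem : a ∈ t.map Prod.fst := by
        rw [← h1]; exact Multiset.mem_map_of_mem _ hab
      obtain ⟨⟨a1, b'⟩, hm1, ha1⟩ := Multiset.mem_map.mp hamem
      dsimp at ha1; subst ha1
      have hbmem : b ∈ t.map Prod.snd := by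
        rw [← h2]; exact Multiset.mem_map_of_mem _ hab
      obtain ⟨⟨a'', b1⟩, hm2, hb1⟩ := Multiset.mem_map.mp hbmem
      dsimp at hb1; subst hb1
      have hne : (a'', b1) ≠ (a1, b') := by
        intro h
        rw [Prod.mk.injEq] at h
        exact hmem (h.1 ▸ hm2)
      have hm2' : (a'', b1) ∈ t.erase (a1, b') :=
        (Multiset.mem_erase_of_ne hne).mpr hm2
      obtain ⟨u, hu⟩ := Multiset.exists_cons_of_mem hm1
      have hm2'' : (a'', b1) ∈ u := by
        have := hm2'
        rw [hu, Multiset.erase_cons_head] at this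
        exact this
      obtain ⟨t₀, ht₀⟩ := Multiset.exists_cons_of_mem hm2''
      subst ht₀; subst hu
      -- swap step
      have hgen : (X (a1, b') * X (a'', b1) - X (a1, b1) * X (a'', b') :
          MvPolynomial (Fin m × Fin n₁) F) ∈ minors F n₁ m :=
        Ideal.subset_span ⟨a1, a'', b', b1, rfl⟩
      have step1 : prodX F ((a1,b') ::ₘ (a'',b1) ::ₘ t₀) -
          prodX F ((a1,b1) ::ₘ (a'',b') ::ₘ t₀) ∈ minors F n₁ m := by
        have heq : prodX F ((a1,b') ::ₘ (a'',b1) ::ₘ t₀) -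
            prodX F ((a1,b1) ::ₘ (a'',b') ::ₘ t₀)
            = (X (a1, b') * X (a'', b1) - X (a1, b1) * X (a'', b')) * prodX F t₀ := by
          simp [prodX_cons]; ring
        rw [heq]
        exact Ideal.mul_mem_right _ _ hgen
      -- the element (a,b1) in s is (a1, b1) after subst
      have h1' : s₀.map Prod.fst = ((a'', b') ::ₘ t₀).map Prod.fst := by
        have h := h1
        simp only [Multiset.map_cons] at h ⊢
        exact (Multiset.cons_inj_right _).mp h
      have h2' : s₀.map Prod.snd = ((a'', b') ::ₘ t₀).map Prod.snd := by
        have h := h2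
        simp only [Multiset.map_cons] at h ⊢
        rw [Multiset.cons_swap] at h
        exact (Multiset.cons_inj_right _).mp h
      have step2 : prodX F ((a1,b1) ::ₘ s₀) -
          prodX F ((a1,b1) ::ₘ (a'',b') ::ₘ t₀) ∈ minors F n₁ m := by
        have heq : prodX F ((a1,b1) ::ₘ s₀) - prodX F ((a1,b1) ::ₘ (a'',b') ::ₘ t₀)
            = X (a1,b1) * (prodX F s₀ - prodX F ((a'',b') ::ₘ t₀)) := by
          simp [prodX_cons]; ring
        rw [heq]
        exact Ideal.mul_mem_left _ _ (ih _ _ hcard h1' h2')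
      have : prodX F ((a1,b1) ::ₘ s₀) - prodX F ((a1,b') ::ₘ (a'',b1) ::ₘ t₀)
          = (prodX F ((a1,b1) ::ₘ s₀) - prodX F ((a1,b1) ::ₘ (a'',b') ::ₘ t₀))
            - (prodX F ((a1,b') ::ₘ (a'',b1) ::ₘ t₀) - prodX F ((a1,b1) ::ₘ (a'',b') ::ₘ t₀)) := by
        ring
      rw [this]
      exact Ideal.sub_mem _ step2 step1


def canonM (s : Multiset (Fin m × Fin n₁)) : Multiset (Fin m × Fin n₁) :=
  (((s.map Prod.fst).sort (· ≤ ·)).zip ((s.map Prod.snd).sort (· ≤ ·)) : List _)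

lemma canonM_len (s : Multiset (Fin m × Fin n₁)) :
    ((s.map Prod.fst).sort (· ≤ ·)).length = ((s.map Prod.snd).sort (· ≤ ·)).length := by
  simp [Multiset.length_sort]

lemma canonM_fst (s : Multiset (Fin m × Fin n₁)) :
    (canonM s).map Prod.fst = s.map Prod.fst := by
  rw [canonM, Multiset.map_coe, List.map_fst_zip (le_of_eq (canonM_len s)),
    Multiset.sort_eq]

lemma canonM_snd (s : Multiset (Fin m × Fin n₁)) :
    (canonM s).map Prod.snd = s.map Prod.snd := by
  rw [canonM, Multiset.map_coe, List.map_snd_zip (ge_of_eq (canonM_len s)),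
    Multiset.sort_eq]

lemma canonM_congr {s t : Multiset (Fin m × Fin n₁)}
    (h1 : s.map Prod.fst = t.map Prod.fst) (h2 : s.map Prod.snd = t.map Prod.snd) :
    canonM s = canonM t := by
  rw [canonM, canonM, h1, h2]

noncomputable def Ed (d : (Fin m × Fin n₁) →₀ ℕ) : (Fin n₁ ⊕ Fin m) →₀ ℕ :=
  Finsupp.mapDomain (fun p => Sum.inl p.2) d + Finsupp.mapDomain (fun p => Sum.inr p.1) d

lemma map_inl_snd (u : Multiset (Fin m × Fin n₁)) :
    u.map (fun p => (Sum.inl p.2 : Fin n₁ ⊕ Fin m)) = (u.map Prod.snd).map Sum.inl := by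
  rw [Multiset.map_map]; rfl

lemma map_inr_fst (u : Multiset (Fin m × Fin n₁)) :
    u.map (fun p => (Sum.inr p.1 : Fin n₁ ⊕ Fin m)) = (u.map Prod.fst).map Sum.inr := by
  rw [Multiset.map_map]; rfl

lemma Ed_toMultiset (d : (Fin m × Fin n₁) →₀ ℕ) :
    (Ed d).toMultiset = d.toMultiset.map (fun p => Sum.inl p.2)
      + d.toMultiset.map (fun p => Sum.inr p.1) := by
  rw [Ed, Finsupp.toMultiset_add, Finsupp.toMultiset_map, Finsupp.toMultiset_map]

lemma count_inr_fst (u : Multiset (Fin m × Fin n₁)) (j : Fin m) :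
    Multiset.count (Sum.inr j : Fin n₁ ⊕ Fin m) (u.map fun p => Sum.inr p.1)
      = Multiset.count j (u.map Prod.fst) := by
  rw [map_inr_fst, Multiset.count_map_eq_count' _ _ Sum.inr_injective]

lemma count_inl_snd (u : Multiset (Fin m × Fin n₁)) (i : Fin n₁) :
    Multiset.count (Sum.inl i : Fin n₁ ⊕ Fin m) (u.map fun p => Sum.inl p.2)
      = Multiset.count i (u.map Prod.snd) := by
  rw [map_inl_snd, Multiset.count_map_eq_count' _ _ Sum.inl_injective]

lemma count_inr_inl (u : Multiset (Fin m × Fin n₁)) (j : Fin m) :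
    Multiset.count (Sum.inr j : Fin n₁ ⊕ Fin m) (u.map fun p => Sum.inl p.2) = 0 :=
  Multiset.count_eq_zero.mpr (by simp)

lemma count_inl_inr (u : Multiset (Fin m × Fin n₁)) (i : Fin n₁) :
    Multiset.count (Sum.inl i : Fin n₁ ⊕ Fin m) (u.map fun p => Sum.inr p.1) = 0 :=
  Multiset.count_eq_zero.mpr (by simp)

lemma Ed_eq_proj {d d' : (Fin m × Fin n₁) →₀ ℕ} (h : Ed d = Ed d') :
    d.toMultiset.map Prod.fst = d'.toMultiset.map Prod.fst ∧
    d.toMultiset.map Prod.snd = d'.toMultiset.map Prod.snd := by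
  have hM := congrArg Finsupp.toMultiset h
  rw [Ed_toMultiset, Ed_toMultiset] at hM
  constructor
  · ext j
    have h2 := congrArg (Multiset.count (Sum.inr j : Fin n₁ ⊕ Fin m)) hM
    rwa [Multiset.count_add, Multiset.count_add, count_inr_fst, count_inr_fst,
      count_inr_inl, count_inr_inl, Nat.zero_add, Nat.zero_add] at h2
  · ext i
    have h2 := congrArg (Multiset.count (Sum.inl i : Fin n₁ ⊕ Fin m)) hM
    rwa [Multiset.count_add, Multiset.count_add, count_inl_snd, count_inl_snd,
      count_inl_inr, count_inl_inr, Nat.add_zero, Nat.add_zero] at h2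

lemma monomial_eq_prodX (d : (Fin m × Fin n₁) →₀ ℕ) :
    (monomial d 1 : MvPolynomial (Fin m × Fin n₁) F) = prodX F d.toMultiset := by
  induction d using Finsupp.induction with
  | zero => simp [prodX]
  | single_add p k d hp hk ih =>
    rw [Finsupp.toMultiset_add, Finsupp.toMultiset_single]
    have h1 : (monomial (Finsupp.single p k + d) (1:F))
        = monomial (Finsupp.single p k) 1 * monomial d 1 := by
      rw [monomial_mul, one_mul]
    rw [h1, ih, ← X_pow_eq_monomial]
    have h2 : prodX F (k • {p} + d.toMultiset) = X p ^ k * prodX F d.toMultiset := by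
      rw [prodX, prodX, Multiset.map_add, Multiset.prod_add]
      congr 1
      rw [Multiset.nsmul_singleton, Multiset.map_replicate, Multiset.prod_replicate]
    rw [h2]

lemma phi_monomial (d : (Fin m × Fin n₁) →₀ ℕ) :
    aeval (fun p : Fin m × Fin n₁ =>
        (X (Sum.inl p.2) * X (Sum.inr p.1) : MvPolynomial (Fin n₁ ⊕ Fin m) F))
      (monomial d (1:F)) = monomial (Ed d) 1 := by
  induction d using Finsupp.induction with
  | zero => simp [Ed]
  | single_add p k d hp hk ih =>
    have h1 : (monomial (Finsupp.single p k + d) (1:F))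
        = monomial (Finsupp.single p k) 1 * monomial d 1 := by
      rw [monomial_mul, one_mul]
    have hEd : Ed (Finsupp.single p k + d)
        = (Finsupp.single (Sum.inl p.2 : Fin n₁ ⊕ Fin m) k
            + Finsupp.single (Sum.inr p.1) k) + Ed d := by
      rw [Ed, Ed, Finsupp.mapDomain_add, Finsupp.mapDomain_add,
        Finsupp.mapDomain_single, Finsupp.mapDomain_single]
      abel
    rw [h1, map_mul, ih, ← X_pow_eq_monomial, map_pow, aeval_X, hEd]
    rw [mul_pow, X_pow_eq_monomial, X_pow_eq_monomial, monomial_mul, monomial_mul]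
    norm_num

noncomputable def canonF (d : (Fin m × Fin n₁) →₀ ℕ) : (Fin m × Fin n₁) →₀ ℕ :=
  (canonM d.toMultiset).toFinsupp

lemma canonF_toMultiset (d : (Fin m × Fin n₁) →₀ ℕ) :
    (canonF d).toMultiset = canonM d.toMultiset :=
  Multiset.toFinsupp_toMultiset _

lemma canonF_fst (d : (Fin m × Fin n₁) →₀ ℕ) :
    (canonF d).toMultiset.map Prod.fst = d.toMultiset.map Prod.fst := by
  rw [canonF_toMultiset, canonM_fst]

lemma canonF_snd (d : (Fin m × Fin n₁) →₀ ℕ) :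
    (canonF d).toMultiset.map Prod.snd = d.toMultiset.map Prod.snd := by
  rw [canonF_toMultiset, canonM_snd]

lemma canonF_congr {d d' : (Fin m × Fin n₁) →₀ ℕ}
    (h1 : d.toMultiset.map Prod.fst = d'.toMultiset.map Prod.fst)
    (h2 : d.toMultiset.map Prod.snd = d'.toMultiset.map Prod.snd) :
    canonF d = canonF d' := by
  rw [canonF, canonF, canonM_congr h1 h2]

lemma canonF_idem (d : (Fin m × Fin n₁) →₀ ℕ) : canonF (canonF d) = canonF d :=
  canonF_congr (canonF_fst d) (canonF_snd d)

lemma monomial_sub_canon_mem (d : (Fin m × Fin n₁) →₀ ℕ) :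
    (monomial d 1 - monomial (canonF d) 1 : MvPolynomial (Fin m × Fin n₁) F)
      ∈ minors F n₁ m := by
  rw [monomial_eq_prodX, monomial_eq_prodX, canonF_toMultiset]
  exact keyA (Multiset.card d.toMultiset) _ _ rfl (canonM_fst _).symm (canonM_snd _).symm

end KernelPhiXAux

open KernelPhiXAux

/-- the kernel of the algebra homomorphism `φ_x` sending `z_{j,i}` to
`x_i * x'_j` equals the ideal generated by the 2×2 minors of the matrix `(z_{j,i})`. -/
theorem kernel_phi_x_eq_two_minors (F : Type*) [Field F] [CharZero F]
    (n₁ m : ℕ) (hn : 1 ≤ n₁) (hm : 1 ≤ m)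
    (φx : MvPolynomial (Fin m × Fin n₁) F →ₐ[F] MvPolynomial (Fin n₁ ⊕ Fin m) F)
    (hφx : φx = aeval (fun p : Fin m × Fin n₁ => X (Sum.inl p.2) * X (Sum.inr p.1))) :
    RingHom.ker φx.toRingHom =
      Ideal.span { p : MvPolynomial (Fin m × Fin n₁) F |
        ∃ (j₁ j₂ : Fin m) (i₁ i₂ : Fin n₁),
          p = X (j₁, i₁) * X (j₂, i₂) - X (j₁, i₂) * X (j₂, i₁) } := by
  subst hφx
  set φ : MvPolynomial (Fin m × Fin n₁) F →ₐ[F] MvPolynomial (Fin n₁ ⊕ Fin m) F :=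
    aeval (fun p : Fin m × Fin n₁ => X (Sum.inl p.2) * X (Sum.inr p.1)) with hφ
  show RingHom.ker φ.toRingHom = minors F n₁ m
  have h1 : minors F n₁ m ≤ RingHom.ker φ.toRingHom := by
    rw [minors, Ideal.span_le]
    rintro r ⟨j₁, j₂, i₁, i₂, rfl⟩
    simp only [SetLike.mem_coe, RingHom.mem_ker]
    show φ _ = 0
    rw [hφ]
    simp only [map_sub, map_mul, aeval_X]
    ring
  refine le_antisymm ?_ h1
  intro p hp
  have hp' : φ p = 0 := hp
  set q : MvPolynomial (Fin m × Fin n₁) F :=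
    ∑ d ∈ p.support, monomial (canonF d) (coeff d p) with hq
  have hpq : p - q ∈ minors F n₁ m := by
    have hrw : p - q = ∑ d ∈ p.support,
        (C (coeff d p) * (monomial d 1 - monomial (canonF d) 1)) := by
      conv_lhs => rw [as_sum p]
      rw [hq, ← Finset.sum_sub_distrib]
      refine Finset.sum_congr rfl fun d _ => ?_
      simp only [mul_sub, C_mul_monomial, mul_one]
    rw [hrw]
    exact Ideal.sum_mem _ fun d _ => Ideal.mul_mem_left _ _ (monomial_sub_canon_mem d)
  have hφq : φ q = 0 := by
    have hqe : q = p - (p - q) := by ring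
    have h2 : φ (p - q) = 0 := h1 hpq
    rw [hqe, map_sub, hp', h2, sub_zero]
  have hφmon : ∀ d : (Fin m × Fin n₁) →₀ ℕ, ∀ c : F,
      φ (monomial d c) = monomial (Ed d) c := by
    intro d c
    have h := phi_monomial (F := F) d
    calc φ (monomial d c) = φ (C c * monomial d 1) := by rw [C_mul_monomial, mul_one]
      _ = C c * monomial (Ed d) 1 := by
          rw [map_mul, hφ, h]
          congr 1
          simp [algHom_C]
      _ = monomial (Ed d) c := by rw [C_mul_monomial, mul_one]
  have hcq : ∀ e, coeff e q = ∑ d ∈ p.support, if canonF d = e then coeff d p else 0 := by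
    intro e
    rw [hq, coeff_sum]
    exact Finset.sum_congr rfl fun d _ => coeff_monomial _ _ _
  have hq0 : q = 0 := by
    ext e
    rw [coeff_zero]
    by_cases hcanon : canonF e = e
    · have hφqe : coeff (Ed e) (φ q)
          = ∑ d ∈ p.support, if canonF d = e then coeff d p else 0 := by
        rw [hq, map_sum]
        rw [Finset.sum_congr rfl fun d _ => hφmon (canonF d) (coeff d p)]
        rw [coeff_sum]
        refine Finset.sum_congr rfl fun d _ => ?_
        rw [coeff_monomial]
        have hiff : (Ed (canonF d) = Ed e) ↔ (canonF d = e) := by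
          constructor
          · intro h
            obtain ⟨hf, hs⟩ := Ed_eq_proj h
            have hc := canonF_congr hf hs
            rwa [canonF_idem, hcanon] at hc
          · intro h; rw [h]
        exact if_congr hiff rfl rfl
      rw [hcq e, ← hφqe, hφq, coeff_zero]
    · rw [hcq e]
      refine Finset.sum_eq_zero fun d _ => ?_
      rw [if_neg]
      intro h
      exact hcanon (by rw [← h, canonF_idem])
  rw [hq0, sub_zero] at hpq
  exact hpq
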